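/- Let $h,g$ be analytic on the unit disk with $h(z)+g(z)=\frac{1}{2i}\log\frac{1+iz}{1-iz}$ and $g'(z)=\omega(z)h'(z)$ where $\omega(z)=\frac{a-z^2}{1-az^2}$ with $-1<a<1$. Then the dilatation $\tilde\omega$ of the convolution $f_{0,0}*f$, given by $\tilde\omega(z)=-z\cdot\frac{\omega'(z)(1+z^2)-2z\omega(z)(1+\omega(z))}{2(1+\omega(z))-z\omega'(z)(1+z^2)}$, satisfies $\tilde\omega(z)=z^2$ for all $z$ in the unit disk. -/

import Mathlib

open Complex

/-- With `ω(z) = (a-z²)/(1-az²)`, the dilatation of `f₀,₀ * f` equals `z²` on the unit disk. -/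
theorem stmt_6 (a : ℝ) (ha : -1 < a) (ha' : a < 1) (ω : ℂ → ℂ)
    (hω : ∀ z : ℂ, ω z = ((a : ℂ) - z ^ 2) / (1 - (a : ℂ) * z ^ 2)) :
    ∀ z : ℂ, ‖z‖ < 1 →
      -z * (deriv ω z * (1 + z ^ 2) - 2 * z * ω z * (1 + ω z)) /
        (2 * (1 + ω z) - z * deriv ω z * (1 + z ^ 2)) = z ^ 2 := by
  intro z hz
  have hz2 : ‖z ^ 2‖ < 1 := by
    rw [norm_pow]
    nlinarith [norm_nonneg z]
  -- denominator 1 - a z² ≠ 0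
  have hden : (1 : ℂ) - (a : ℂ) * z ^ 2 ≠ 0 := by
    intro h
    have h1 : (a : ℂ) * z ^ 2 = 1 := by linear_combination -h
    have : ‖(a : ℂ) * z ^ 2‖ < 1 := by
      rw [norm_mul, Complex.norm_real, Real.norm_eq_abs]
      have h2 : |a| ≤ 1 := by rw [abs_le]; constructor <;> linarith
      nlinarith [norm_nonneg (z ^ 2), abs_nonneg a]
    rw [h1, norm_one] at this
    exact lt_irrefl 1 this
  -- 1 - 2 a z² + z⁴ ≠ 0
  have hQ : (1 : ℂ) - 2 * (a : ℂ) * z ^ 2 + z ^ 4 ≠ 0 := by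
    intro h
    set u : ℂ := z ^ 2 - (a : ℂ) with hu
    have hb : (0 : ℝ) < 1 - a ^ 2 := by nlinarith
    have hu2 : u ^ 2 = -((1 : ℂ) - (a : ℂ) ^ 2) := by
      simp only [hu]; linear_combination h
    have hre : u.re ^ 2 - u.im ^ 2 = -(1 - a ^ 2) := by
      have := congrArg Complex.re hu2
      simpa [Complex.sq_norm, pow_two, Complex.mul_re, Complex.mul_im] using this
    have him : u.re * u.im = 0 := by
      have := congrArg Complex.im hu2
      simp [pow_two, Complex.mul_re, Complex.mul_im] at this
      linarith
    have hre0 : u.re = 0 := by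
      rcases mul_eq_zero.mp him with h' | h'
      · exact h'
      · exfalso; rw [h'] at hre; nlinarith
    have him2 : u.im ^ 2 = 1 - a ^ 2 := by nlinarith
    -- then ‖z²‖² = a² + (1-a²) = 1
    have hzre : (z ^ 2).re = a := by
      have := congrArg Complex.re hu
      simp [Complex.sub_re] at this
      linarith [hre0, this]
    have hzim : (z ^ 2).im = u.im := by
      have := congrArg Complex.im hu
      simp [Complex.sub_im] at this
      linarith
    have hns : Complex.normSq (z ^ 2) = 1 := by
      rw [Complex.normSq_apply, hzre, hzim]
      nlinarith
    have : ‖z ^ 2‖ = 1 := by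
      rw [Complex.norm_def, hns, Real.sqrt_one]
    linarith
  -- derivative of ω
  have hderiv : deriv ω z =
      ((-2 * z) * (1 - (a : ℂ) * z ^ 2) - ((a : ℂ) - z ^ 2) * (-2 * (a : ℂ) * z)) /
        (1 - (a : ℂ) * z ^ 2) ^ 2 := by
    have h1 : HasDerivAt (fun w : ℂ => (a : ℂ) - w ^ 2) (-2 * z) z := by
      have := ((hasDerivAt_pow 2 z).const_sub (a : ℂ))
      simpa using this.congr_deriv (by ring)
    have h2 : HasDerivAt (fun w : ℂ => 1 - (a : ℂ) * w ^ 2) (-2 * (a : ℂ) * z) z := by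
      have := (((hasDerivAt_pow 2 z).const_mul (a : ℂ)).const_sub (1 : ℂ))
      simpa using this.congr_deriv (by ring)
    have h3 := h1.div h2 hden
    have : deriv (fun w : ℂ => ((a : ℂ) - w ^ 2) / (1 - (a : ℂ) * w ^ 2)) z = _ := h3.deriv
    rw [show ω = fun w : ℂ => ((a : ℂ) - w ^ 2) / (1 - (a : ℂ) * w ^ 2) from funext hω]
    exact this
  have ha1 : (1 : ℂ) + (a : ℂ) ≠ 0 := by
    intro h
    have : (a : ℂ) = -1 := by linear_combination h
    have : a = (-1 : ℝ) := by exact_mod_cast this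
    linarith
  have hD : 2 * (1 + ((a : ℂ) - z ^ 2) / (1 - (a : ℂ) * z ^ 2)) -
      z * (((-2 * z) * (1 - (a : ℂ) * z ^ 2) - ((a : ℂ) - z ^ 2) * (-2 * (a : ℂ) * z)) /
        (1 - (a : ℂ) * z ^ 2) ^ 2) * (1 + z ^ 2) ≠ 0 := by
    intro h
    have h2 : (1 - (a : ℂ) * z ^ 2) ^ 2 ≠ 0 := pow_ne_zero _ hden
    field_simp at h
    apply hQ
    have h3 : (2 : ℂ) * (1 + (a : ℂ)) * (1 - (a : ℂ) * z ^ 2) *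
        (1 - 2 * (a : ℂ) * z ^ 2 + z ^ 4) = 0 := by
      linear_combination (1 - (a : ℂ) * z ^ 2) * h
    rcases mul_eq_zero.mp h3 with h4 | h4
    · rcases mul_eq_zero.mp h4 with h5 | h5
      · exact absurd (mul_eq_zero.mp h5) (by push_neg; exact ⟨by norm_num, ha1⟩)
      · exact absurd h5 hden
    · exact h4
  rw [hω, hderiv, div_eq_iff hD]
  have hden' : (1 : ℂ) - z ^ 2 * (a : ℂ) ≠ 0 := by rwa [mul_comm]
  field_simp
  ring
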